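/- Let 2 ≤ k ≤ n and let v_1, …, v_k ∈ ℂ^n with |v_j| = 1 for each j and |v_1 ∧ v_2 ∧ ⋯ ∧ v_k| > c for some c > 0. Then there is a constant C, depending only on n, k, c, such that for every δ > 0 and all finite collections 𝕌_{j,δ} (1 ≤ j ≤ k), where each member of 𝕌_{j,δ} is the δ-neighborhood of an affine complex line of ℂ^n with direction exactly v_j, one has ∫_{ℝ^{2n}} ∏_{j=1}^k (∑_{U_{i,j} ∈ 𝕌_{j,δ}} χ_{U_{i,j}})^{1/(k−1)} ≤ C δ^{2n} ∏_{j=1}^k (#𝕌_{j,δ})^{1/(k−1)}. -/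

import Mathlib

open MeasureTheory
open Finset
open scoped ENNReal

noncomputable section

/-- The Euclidean norm `|v| = (∑ j |v_j|²)^{1/2}` on `ℂ^m ≅ ℝ^{2m}`. -/
def cnorm {m : ℕ} (v : Fin m → ℂ) : ℝ :=
  Real.sqrt (∑ j, ‖v j‖ ^ 2)

/-- The identification `I : ℂ^m → ℝ^{2m}`,
`I(v) = (Re v_1, Im v_1, …, Re v_m, Im v_m)`, coordinates indexed by
`(j, e) : Fin m × Fin 2`. -/
def Irl {m : ℕ} (v : Fin m → ℂ) : Fin m × Fin 2 → ℝ :=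
  fun p => if p.2 = 0 then (v p.1).re else (v p.1).im

/-- The set of values `|det (I(v_1), I(i v_1), …, I(v_k), I(i v_k),
u_1, …, u_{2m-2k})|` over all orthonormal families `u` orthogonal to the
vectors `I(v_j), I(i v_j)`.  (All elements of this set coincide, so its
supremum is the quantity `|v_1 ∧ ⋯ ∧ v_k|` of Definition 3.4.) -/
def wedgeSet {m k : ℕ} (v : Fin k → (Fin m → ℂ)) : Set ℝ :=
  { D | ∃ u : Fin m × Fin 2 → (Fin m × Fin 2 → ℝ),
      (∀ p q : Fin m × Fin 2, k ≤ (p.1 : ℕ) → k ≤ (q.1 : ℕ) →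
        (∑ r, u p r * u q r) = if p = q then 1 else 0) ∧
      (∀ p : Fin m × Fin 2, k ≤ (p.1 : ℕ) → ∀ j : Fin k, ∀ e : Fin 2,
        (∑ r, u p r *
          (if e = 0 then Irl (v j) r else Irl (Complex.I • v j) r)) = 0) ∧
      D = |(Matrix.of fun (r c : Fin m × Fin 2) =>
            if h : (c.1 : ℕ) < k then
              (if c.2 = 0 then Irl (v ⟨c.1, h⟩) r
                else Irl (Complex.I • v ⟨c.1, h⟩) r)
            else u c r).det| }

/-- `|v_1 ∧ v_2 ∧ ⋯ ∧ v_k|` of Definition 3.4. -/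
def wedgeAbs {m k : ℕ} (v : Fin k → (Fin m → ℂ)) : ℝ :=
  sSup (wedgeSet v)

/-- The `δ`-neighborhood of the affine complex line `{a + λ v : λ ∈ ℂ} ⊆ ℂ^m`
(with respect to the Euclidean distance on `ℂ^m ≅ ℝ^{2m}`). -/
def tube {m : ℕ} (a v : Fin m → ℂ) (δ : ℝ) : Set (Fin m → ℂ) :=
  { w | ∃ lam : ℂ, cnorm (fun j => w j - (a j + lam * v j)) < δ }

/-- The cube `[−1, 1]^{2m} ⊆ ℝ^{2m} ≅ ℂ^m`. -/
def unitCube (m : ℕ) : Set (Fin m → ℂ) :=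
  { w | ∀ j, |(w j).re| ≤ 1 ∧ |(w j).im| ≤ 1 }


open Finset in
theorem lw_marginal {ι : Type*} [Fintype ι] [DecidableEq ι] {π : ι → Type*}
    [∀ i, MeasurableSpace (π i)] (μ : ∀ i, Measure (π i)) [∀ i, SigmaFinite (μ i)]
    {k : ℕ} (hk2 : 2 ≤ k) (e : Fin k → ι) (he : Function.Injective e)
    (f : Fin k → (∀ i, π i) → ℝ≥0∞) (hf : ∀ j, Measurable (f j))
    (hind : ∀ j x t, f j (Function.update x (e j) t) = f j x)
    (s : Finset ι) (hs : s ⊆ Finset.image e Finset.univ) (x : ∀ i, π i) :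
    (∫⋯∫⁻_s, (fun y => ∏ j, f j y ^ ((1:ℝ)/((k:ℝ)-1))) ∂μ) x ≤
      ∏ j, ((∫⋯∫⁻_(s.erase (e j)), f j ∂μ) x) ^ ((1:ℝ)/((k:ℝ)-1)) := by
  have hkR : ((k:ℝ) - 1) ≠ 0 := by
    have : (2:ℝ) ≤ (k:ℝ) := by exact_mod_cast hk2
    linarith
  set p : ℝ := 1/((k:ℝ)-1) with hp
  have hp0 : 0 ≤ p := by
    apply div_nonneg zero_le_one
    have : (2:ℝ) ≤ (k:ℝ) := by exact_mod_cast hk2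
    linarith
  have hF : Measurable fun y => ∏ j, f j y ^ p :=
    Finset.measurable_prod _ (fun j _ => (hf j).pow_const p)
  induction s using Finset.induction generalizing x with
  | empty =>
    simp [lmarginal_empty]
  | @insert m s hm ih =>
    obtain ⟨j₀, -, hj₀⟩ := Finset.mem_image.1 (hs (Finset.mem_insert_self m s))
    subst hj₀
    have hs' : s ⊆ Finset.image e Finset.univ :=
      fun a ha => hs (Finset.mem_insert_of_mem ha)
    rw [lmarginal_insert _ hF hm]
    have key : ∀ t, (∫⋯∫⁻_s, (fun y => ∏ j, f j y ^ p) ∂μ) (Function.update x (e j₀) t) ≤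
        ∏ j, ((∫⋯∫⁻_(s.erase (e j)), f j ∂μ) (Function.update x (e j₀) t)) ^ p :=
      fun t => ih hs' (Function.update x (e j₀) t)
    have hconst : ∀ t, (∫⋯∫⁻_s, f j₀ ∂μ) (Function.update x (e j₀) t) = (∫⋯∫⁻_s, f j₀ ∂μ) x := by
      intro t
      rw [lmarginal_update_of_notMem (hf j₀) hm]
      congr 1
      funext y
      exact hind j₀ y t
    have hGmeas : ∀ j : Fin k, Measurable fun t =>
        (∫⋯∫⁻_(s.erase (e j)), f j ∂μ) (Function.update x (e j₀) t) :=
      fun j => ((hf j).lmarginal μ).comp (measurable_update x)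
    calc ∫⁻ t, (∫⋯∫⁻_s, (fun y => ∏ j, f j y ^ p) ∂μ) (Function.update x (e j₀) t) ∂μ (e j₀)
        ≤ ∫⁻ t, ∏ j, ((∫⋯∫⁻_(s.erase (e j)), f j ∂μ) (Function.update x (e j₀) t)) ^ p ∂μ (e j₀) :=
          lintegral_mono key
      _ = ∫⁻ t, ((∫⋯∫⁻_s, f j₀ ∂μ) x) ^ p *
            ∏ j ∈ Finset.univ.erase j₀,
              ((∫⋯∫⁻_(s.erase (e j)), f j ∂μ) (Function.update x (e j₀) t)) ^ p ∂μ (e j₀) := by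
          congr 1; funext t
          rw [← Finset.mul_prod_erase Finset.univ _ (Finset.mem_univ j₀)]
          congr 2
          rw [Finset.erase_eq_of_notMem hm, hconst t]
      _ = ((∫⋯∫⁻_s, f j₀ ∂μ) x) ^ p *
            ∫⁻ t, ∏ j ∈ Finset.univ.erase j₀,
              ((∫⋯∫⁻_(s.erase (e j)), f j ∂μ) (Function.update x (e j₀) t)) ^ p ∂μ (e j₀) := by
          rw [lintegral_const_mul]
          exact Finset.measurable_prod _ (fun j _ => (hGmeas j).pow_const p)
      _ ≤ ((∫⋯∫⁻_s, f j₀ ∂μ) x) ^ p *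
            ∏ j ∈ Finset.univ.erase j₀,
              (∫⁻ t, (∫⋯∫⁻_(s.erase (e j)), f j ∂μ) (Function.update x (e j₀) t) ∂μ (e j₀)) ^ p := by
          gcongr
          apply ENNReal.lintegral_prod_norm_pow_le
          · exact fun j _ => (hGmeas j).aemeasurable
          · rw [Finset.sum_const, Finset.card_erase_of_mem (Finset.mem_univ j₀),
              Finset.card_univ, Fintype.card_fin, nsmul_eq_mul, hp]
            rw [Nat.cast_sub (Nat.one_le_of_lt hk2), Nat.cast_one]
            field_simp
          · exact fun _ _ => hp0
      _ = ∏ j, ((∫⋯∫⁻_((insert (e j₀) s).erase (e j)), f j ∂μ) x) ^ p := by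
          rw [← Finset.mul_prod_erase Finset.univ
            (fun j => ((∫⋯∫⁻_((insert (e j₀) s).erase (e j)), f j ∂μ) x) ^ p) (Finset.mem_univ j₀)]
          congr 1
          · rw [Finset.erase_insert hm]
          · apply Finset.prod_congr rfl
            intro j hj
            have hjne : j ≠ j₀ := (Finset.mem_erase.1 hj).1
            have hne : e j₀ ≠ e j := fun h => hjne (he h).symm
            have hmne : e j₀ ∉ s.erase (e j) := fun h => hm (Finset.mem_of_mem_erase h)
            rw [Finset.erase_insert_of_ne hne, ← lmarginal_insert _ (hf j) hmne]

open Finset in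
theorem lmarginal_tensor {ι : Type*} [DecidableEq ι] {π : ι → Type*}
    [∀ i, MeasurableSpace (π i)] (μ : ∀ i, Measure (π i)) [∀ i, SigmaFinite (μ i)]
    (A : Finset ι) (c : ∀ m, π m → ℝ≥0∞) (hc : ∀ m, Measurable (c m)) :
    ∀ T : Finset ι, T ⊆ A → ∀ x,
      (∫⋯∫⁻_T, (fun y => ∏ m ∈ A, c m (y m)) ∂μ) x =
        (∏ m ∈ T, ∫⁻ t, c m t ∂μ m) * ∏ m ∈ A \ T, c m (x m) := by
  have hmeas : Measurable (fun y : ∀ i, π i => ∏ m ∈ A, c m (y m)) :=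
    Finset.measurable_prod _ (fun m _ => (hc m).comp (measurable_pi_apply m))
  intro T
  induction T using Finset.induction with
  | empty => intro _ x; simp
  | @insert i T hi ih =>
    intro hsub x
    have hiA : i ∈ A := hsub (Finset.mem_insert_self i T)
    have hTA : T ⊆ A := fun a ha => hsub (Finset.mem_insert_of_mem ha)
    have hiAT : i ∈ A \ T := Finset.mem_sdiff.2 ⟨hiA, hi⟩
    rw [lmarginal_insert _ hmeas hi]
    calc ∫⁻ t, (∫⋯∫⁻_T, (fun y => ∏ m ∈ A, c m (y m)) ∂μ) (Function.update x i t) ∂μ i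
        = ∫⁻ t, ((∏ m ∈ T, ∫⁻ t', c m t' ∂μ m) *
            ∏ m ∈ (A \ T).erase i, c m (x m)) * c i t ∂μ i := by
          congr 1; funext t
          rw [ih hTA (Function.update x i t)]
          rw [← Finset.mul_prod_erase (A \ T) _ hiAT]
          have h1 : c i (Function.update x i t i) = c i t := by rw [Function.update_self]
          have h2 : ∀ m ∈ (A \ T).erase i, c m (Function.update x i t m) = c m (x m) := by
            intro m hm
            rw [Function.update_of_ne (Finset.mem_erase.1 hm).1]
          rw [h1, Finset.prod_congr rfl h2]
          ring
      _ = ((∏ m ∈ T, ∫⁻ t', c m t' ∂μ m) * ∏ m ∈ (A \ T).erase i, c m (x m)) *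
            ∫⁻ t, c i t ∂μ i := lintegral_const_mul'' _ (hc i).aemeasurable
      _ = (∏ m ∈ insert i T, ∫⁻ t', c m t' ∂μ m) * ∏ m ∈ A \ insert i T, c m (x m) := by
          rw [Finset.prod_insert hi, Finset.sdiff_insert]
          ring

/-- determinant bound for matrices with entries bounded by 1 -/
theorem abs_det_le_factorial {ι : Type*} [Fintype ι] [DecidableEq ι]
    (A : Matrix ι ι ℝ) (h : ∀ i j, |A i j| ≤ 1) :
    |A.det| ≤ Nat.factorial (Fintype.card ι) := by
  rw [Matrix.det_apply]
  calc |∑ σ : Equiv.Perm ι, Equiv.Perm.sign σ • ∏ i, A (σ i) i|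
      ≤ ∑ σ : Equiv.Perm ι, |Equiv.Perm.sign σ • ∏ i, A (σ i) i| :=
        Finset.abs_sum_le_sum_abs _ _
    _ ≤ ∑ _σ : Equiv.Perm ι, 1 := by
        refine Finset.sum_le_sum (fun σ _ => ?_)
        have h1 : |(∏ i, A (σ i) i : ℝ)| ≤ 1 := by
          rw [Finset.abs_prod]
          exact Finset.prod_le_one (fun _ _ => abs_nonneg _) (fun i _ => h _ _)
        rcases Int.units_eq_one_or (Equiv.Perm.sign σ) with hs | hs <;>
          simp [hs, h1, abs_neg]
    _ = Nat.factorial (Fintype.card ι) := by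
        rw [Finset.sum_const, Finset.card_univ, Fintype.card_perm, nsmul_eq_mul, mul_one]

theorem cnorm_sq_one {m : ℕ} {v : Fin m → ℂ} (hv : cnorm v = 1) :
    ∑ j, ‖v j‖ ^ 2 = 1 := by
  have h0 : 0 ≤ ∑ j, ‖v j‖ ^ 2 :=
    Finset.sum_nonneg (fun j _ => sq_nonneg _)
  have := hv
  rw [cnorm] at this
  nlinarith [Real.sq_sqrt h0]

theorem abs_coord_le_one {m : ℕ} {v : Fin m → ℂ} (hv : cnorm v = 1) (j : Fin m) :
    ‖v j‖ ≤ 1 := by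
  have h1 := cnorm_sq_one hv
  have h2 : ‖v j‖ ^ 2 ≤ 1 := by
    calc ‖v j‖ ^ 2 ≤ ∑ i, ‖v i‖ ^ 2 :=
          Finset.single_le_sum (f := fun i => ‖v i‖ ^ 2) (fun i _ => sq_nonneg _) (Finset.mem_univ j)
      _ = 1 := h1
  nlinarith [norm_nonneg (v j)]

/-- Extraction of a good matrix from the wedge hypothesis. -/
theorem wedge_matrix {n k : ℕ} (hkn : k ≤ n) (c : ℝ) (hc : 0 < c)
    (v : Fin k → (Fin n → ℂ)) (hv : ∀ j, cnorm (v j) = 1)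
    (hwedge : c < wedgeAbs v) :
    ∃ M : Matrix (Fin n × Fin 2) (Fin n × Fin 2) ℝ,
      (∀ (j : Fin k) (ε : Fin 2) (r : Fin n × Fin 2),
        M r (Fin.castLE hkn j, ε) =
          (if ε = 0 then Irl (v j) r else Irl (Complex.I • v j) r)) ∧
      (∀ r s, |M r s| ≤ 1) ∧ c < |M.det| := by
  have h1 : ∃ D ∈ wedgeSet v, c < D := by
    by_contra h
    push_neg at h
    have : wedgeAbs v ≤ c := Real.sSup_le h hc.le
    linarith [hwedge]
  obtain ⟨D, ⟨u, hortho, -, hDeq⟩, hcD⟩ := h1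
  refine ⟨Matrix.of fun (r s : Fin n × Fin 2) =>
      if h : (s.1 : ℕ) < k then
        (if s.2 = 0 then Irl (v ⟨s.1, h⟩) r
          else Irl (Complex.I • v ⟨s.1, h⟩) r)
      else u s r, ?_, ?_, ?_⟩
  · intro j ε r
    have hj : ((Fin.castLE hkn j : Fin n) : ℕ) < k := by
      simp [Fin.coe_castLE, j.isLt]
    simp only [Matrix.of_apply, dif_pos hj]
    congr 2 <;> exact congrArg v (Fin.ext (by simp [Fin.coe_castLE]))
  · intro r s
    simp only [Matrix.of_apply]
    split_ifs with h1 h2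
    · -- |Irl (v ⟨s.1, h1⟩) r| ≤ 1
      rw [Irl]
      have hb := abs_coord_le_one (hv ⟨s.1, h1⟩) r.1
      split_ifs
      · exact le_trans (Complex.abs_re_le_norm _) hb
      · exact le_trans (Complex.abs_im_le_norm _) hb
    · rw [Irl]
      have hb := abs_coord_le_one (hv ⟨s.1, h1⟩) r.1
      have hsmul : (Complex.I • v ⟨s.1, h1⟩) r.1 = Complex.I * v ⟨s.1, h1⟩ r.1 := rfl
      split_ifs
      · rw [hsmul]
        refine le_trans (Complex.abs_re_le_norm _) ?_
        rw [norm_mul, Complex.norm_I, one_mul]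
        exact hb
      · rw [hsmul]
        refine le_trans (Complex.abs_im_le_norm _) ?_
        rw [norm_mul, Complex.norm_I, one_mul]
        exact hb
    · -- u entries
      have hsq : ∑ r', u s r' * u s r' = 1 := by
        have := hortho s s (le_of_not_gt h1) (le_of_not_gt h1)
        simpa using this
      have h2 : (u s r)^2 ≤ 1 := by
        calc (u s r)^2 ≤ ∑ r', (u s r')^2 :=
              Finset.single_le_sum (f := fun r' => (u s r')^2) (fun i _ => sq_nonneg _) (Finset.mem_univ r)
          _ = 1 := by rw [← hsq]; exact Finset.sum_congr rfl (fun i _ => sq (u s i))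
      rw [abs_le]
      constructor <;> nlinarith
  · rw [hDeq] at hcD
    exact hcD

/-- `Irl` as an `ℝ`-linear equivalence. -/
def IrlEquiv (n : ℕ) : (Fin n → ℂ) ≃ₗ[ℝ] (Fin n × Fin 2 → ℝ) where
  toFun := Irl
  invFun y := fun m => ⟨y (m, 0), y (m, 1)⟩
  map_add' x y := by
    funext p
    simp only [Irl, Pi.add_apply, Complex.add_re, Complex.add_im]
    split <;> rfl
  map_smul' r x := by
    funext p
    simp only [Irl, Pi.smul_apply, Complex.real_smul, RingHom.id_apply,
      Complex.mul_re, Complex.mul_im, Complex.ofReal_re, Complex.ofReal_im,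
      Pi.smul_apply, smul_eq_mul]
    split <;> ring
  left_inv x := by
    funext m
    apply Complex.ext <;> simp [Irl]
  right_inv y := by
    funext p
    rcases p with ⟨m, ε⟩
    fin_cases ε <;> simp [Irl]

open Finset in
theorem core_ineq {n k : ℕ} (hk2 : 2 ≤ k) (hkn : k ≤ n) (r : ℝ)
    (N : Fin k → ℕ) (bc : (j : Fin k) → Fin (N j) → Fin n → ℂ) :
    ∫⁻ x : Fin n → ℂ, ∏ j, (∑ i, ∏ m ∈ Finset.univ.erase (Fin.castLE hkn j),
        (Metric.closedBall (bc j i m) r).indicator (1 : ℂ → ℝ≥0∞) (x m)) ^ ((1:ℝ)/((k:ℝ)-1))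
      ≤ (ENNReal.ofReal r ^ 2 * (NNReal.pi : ℝ≥0∞)) ^ n *
        ∏ j, (N j : ℝ≥0∞) ^ ((1:ℝ)/((k:ℝ)-1)) := by
  classical
  -- real-exponent facts
  have hk2R : (2:ℝ) ≤ (k:ℝ) := by exact_mod_cast hk2
  have hk1R : ((k:ℝ) - 1) ≠ 0 := by linarith
  have hk0R : (k:ℝ) ≠ 0 := by linarith
  set p : ℝ := 1/((k:ℝ)-1) with hp
  set q : ℝ := 1/(k:ℝ) with hq
  have hp0 : 0 ≤ p := by rw [hp]; apply div_nonneg zero_le_one; linarith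
  have hq0 : 0 ≤ q := by rw [hq]; positivity
  have e1 : p * q + q = p := by rw [hp, hq]; field_simp; ring
  have eqk : q * (k:ℝ) = 1 := by rw [hq]; field_simp
  have epk : ((k:ℝ) - 1) * p = 1 := by rw [hp]; field_simp
  -- notation
  set μ : Fin n → Measure ℂ := fun _ => (volume : Measure ℂ) with hμ
  set e : Fin k → Fin n := Fin.castLE hkn with he_def
  have he : Function.Injective e := Fin.castLE_injective hkn
  set a : ℝ≥0∞ := ENNReal.ofReal r ^ 2 * (NNReal.pi : ℝ≥0∞) with ha
  set ind : (j : Fin k) → Fin (N j) → Fin n → ℂ → ℝ≥0∞ :=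
    fun j i m => (Metric.closedBall (bc j i m) r).indicator 1 with hind_def
  have hind_meas : ∀ j i m, Measurable (ind j i m) :=
    fun j i m => measurable_const.indicator measurableSet_closedBall
  have hind_int : ∀ j i m, ∫⁻ t, ind j i m t ∂(volume : Measure ℂ) = a := by
    intro j i m
    rw [hind_def]
    rw [lintegral_indicator_one measurableSet_closedBall, Complex.volume_closedBall]
  have hind_le_one : ∀ j i m t, ind j i m t ≤ 1 := by
    intro j i m t
    by_cases h : t ∈ Metric.closedBall (bc j i m) r <;> simp [hind_def, Set.indicator_apply, h]
  set S : Finset (Fin n) := Finset.image e Finset.univ with hS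
  have hejS : ∀ j, e j ∈ S := fun j => Finset.mem_image_of_mem e (Finset.mem_univ j)
  have hcardS : S.card = k := by
    rw [hS, Finset.card_image_of_injective _ he, Finset.card_univ, Fintype.card_fin]
  set g : Fin k → (Fin n → ℂ) → ℝ≥0∞ :=
    fun j y => ∑ i, ∏ m ∈ Finset.univ.erase (e j), ind j i m (y m) with hg
  set H : Fin k → (Fin n → ℂ) → ℝ≥0∞ :=
    fun j x => ∑ i, ∏ m ∈ Sᶜ, ind j i m (x m) with hH
  have htensor_meas : ∀ (j : Fin k) (i : Fin (N j)) (A : Finset (Fin n)),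
      Measurable (fun y : Fin n → ℂ => ∏ m ∈ A, ind j i m (y m)) :=
    fun j i A => Finset.measurable_prod _
      (fun m _ => (hind_meas j i m).comp (measurable_pi_apply m))
  have hg_meas : ∀ j, Measurable (g j) :=
    fun j => Finset.measurable_sum _ (fun i _ => htensor_meas j i _)
  have hH_meas : ∀ j, Measurable (H j) :=
    fun j => Finset.measurable_sum _ (fun i _ => htensor_meas j i _)
  have hg_ind : ∀ j x t, g j (Function.update x (e j) t) = g j x := by
    intro j x t
    rw [hg]
    refine Finset.sum_congr rfl (fun i _ => Finset.prod_congr rfl (fun m hm => ?_))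
    rw [Function.update_of_ne (Finset.mem_erase.1 hm).1]
  set Fint : (Fin n → ℂ) → ℝ≥0∞ := fun y => ∏ j, (g j y) ^ p with hFint
  have hF_meas : Measurable Fint :=
    Finset.measurable_prod _ (fun j _ => (hg_meas j).pow_const p)
  have hH_le : ∀ j x, H j x ≤ (N j : ℝ≥0∞) := by
    intro j x
    rw [hH]
    calc ∑ i, ∏ m ∈ Sᶜ, ind j i m (x m) ≤ ∑ _i : Fin (N j), 1 :=
          Finset.sum_le_sum (fun i _ =>
            Finset.prod_le_one (fun _ _ => zero_le) (fun m _ => hind_le_one j i m _))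
      _ = (N j : ℝ≥0∞) := by simp
  -- finset identity
  have hAT : ∀ j : Fin k, (Finset.univ.erase (e j)) \ (S.erase (e j)) = Sᶜ := by
    intro j
    ext m
    by_cases hme : m = e j
    · subst hme
      simp [Finset.mem_sdiff, Finset.mem_erase, Finset.mem_compl, hejS j]
    · simp [Finset.mem_sdiff, Finset.mem_erase, Finset.mem_compl, hme]
  -- marginal of g over S.erase (e j)
  have hmarg_g : ∀ j x, (∫⋯∫⁻_(S.erase (e j)), g j ∂μ) x = a ^ (k-1) * H j x := by
    intro j x
    have hTsub : S.erase (e j) ⊆ Finset.univ.erase (e j) :=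
      Finset.erase_subset_erase _ (Finset.subset_univ S)
    have hsum : (∫⋯∫⁻_(S.erase (e j)), g j ∂μ) x =
        ∑ i, (∫⋯∫⁻_(S.erase (e j)),
          (fun y => ∏ m ∈ Finset.univ.erase (e j), ind j i m (y m)) ∂μ) x := by
      simp only [lmarginal, hg]
      rw [lintegral_finset_sum]
      exact fun i _ => (htensor_meas j i _).comp measurable_updateFinset
    rw [hsum]
    have heach : ∀ i, (∫⋯∫⁻_(S.erase (e j)),
        (fun y => ∏ m ∈ Finset.univ.erase (e j), ind j i m (y m)) ∂μ) x =
        a ^ (k-1) * ∏ m ∈ Sᶜ, ind j i m (x m) := by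
      intro i
      rw [lmarginal_tensor μ (Finset.univ.erase (e j)) (fun m => ind j i m)
        (fun m => hind_meas j i m) (S.erase (e j)) hTsub x]
      rw [hAT j]
      congr 1
      have : ∀ m ∈ S.erase (e j), (∫⁻ t, ind j i m t ∂μ m) = a := fun m _ => hind_int j i m
      rw [Finset.prod_congr rfl this, Finset.prod_const,
        Finset.card_erase_of_mem (hejS j), hcardS]
    rw [Finset.sum_congr rfl (fun i _ => heach i), ← Finset.mul_sum, hH]
  -- marginal of H over Sᶜ
  have hmarg_H : ∀ j x, (∫⋯∫⁻_(Sᶜ), H j ∂μ) x = (N j : ℝ≥0∞) * a ^ (n - k) := by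
    intro j x
    have hsum : (∫⋯∫⁻_(Sᶜ), H j ∂μ) x =
        ∑ i, (∫⋯∫⁻_(Sᶜ), (fun y => ∏ m ∈ Sᶜ, ind j i m (y m)) ∂μ) x := by
      simp only [lmarginal, hH]
      rw [lintegral_finset_sum]
      exact fun i _ => (htensor_meas j i _).comp measurable_updateFinset
    rw [hsum]
    have heach : ∀ i, (∫⋯∫⁻_(Sᶜ), (fun y => ∏ m ∈ Sᶜ, ind j i m (y m)) ∂μ) x =
        a ^ (n - k) := by
      intro i
      rw [lmarginal_tensor μ (Sᶜ) (fun m => ind j i m)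
        (fun m => hind_meas j i m) (Sᶜ) (Finset.Subset.refl _) x]
      rw [Finset.sdiff_self, Finset.prod_empty, mul_one]
      have : ∀ m ∈ (Sᶜ : Finset (Fin n)), (∫⁻ t, ind j i m t ∂μ m) = a :=
        fun m _ => hind_int j i m
      rw [Finset.prod_congr rfl this, Finset.prod_const, Finset.card_compl, hcardS,
        Fintype.card_fin]
    rw [Finset.sum_congr rfl (fun i _ => heach i), Finset.sum_const, Finset.card_univ,
      Fintype.card_fin, nsmul_eq_mul]
  -- stage 1
  have stage1 : ∀ x, (∫⋯∫⁻_S, Fint ∂μ) x ≤ a ^ k * ∏ j, (H j x) ^ p := by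
    intro x
    calc (∫⋯∫⁻_S, Fint ∂μ) x ≤ ∏ j, ((∫⋯∫⁻_(S.erase (e j)), g j ∂μ) x) ^ p :=
          lw_marginal μ hk2 e he g hg_meas hg_ind S (Finset.Subset.refl _) x
      _ = ∏ j, (a ^ (k-1) * H j x) ^ p := by
          refine Finset.prod_congr rfl (fun j _ => ?_)
          rw [hmarg_g j x]
      _ = a ^ k * ∏ j, (H j x) ^ p := by
          have hsplit : ∀ j : Fin k, (a ^ (k-1) * H j x) ^ p =
              (a ^ (k-1)) ^ p * (H j x) ^ p :=
            fun j => ENNReal.mul_rpow_of_nonneg _ _ hp0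
          rw [Finset.prod_congr rfl (fun j _ => hsplit j), Finset.prod_mul_distrib,
            Finset.prod_const, Finset.card_univ, Fintype.card_fin]
          congr 1
          have h1 : (a ^ (k-1) : ℝ≥0∞) ^ p = a ^ (((k-1:ℕ):ℝ) * p) := by
            rw [← ENNReal.rpow_natCast a (k-1), ← ENNReal.rpow_mul]
          rw [h1, ← ENNReal.rpow_natCast (a ^ (((k-1:ℕ):ℝ) * p)) k, ← ENNReal.rpow_mul]
          rw [Nat.cast_sub (by omega : 1 ≤ k), Nat.cast_one, epk, one_mul,
            ENNReal.rpow_natCast]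
  -- stage 2
  have stage2 : ∀ x, (∫⋯∫⁻_(Sᶜ), (fun y => ∏ j, (H j y) ^ p) ∂μ) x ≤
      ∏ j, ((N j : ℝ≥0∞) ^ p * ((∫⋯∫⁻_(Sᶜ), H j ∂μ) x)) ^ q := by
    intro x
    have hpoint : ∀ (j : Fin k) (z : ℝ≥0∞), z ≤ (N j : ℝ≥0∞) →
        z ^ p ≤ ((N j : ℝ≥0∞) ^ p * z) ^ q := by
      intro j z hz
      rw [ENNReal.mul_rpow_of_nonneg _ _ hq0, ← ENNReal.rpow_mul]
      calc z ^ p = z ^ (p * q + q) := by rw [e1]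
        _ = z ^ (p * q) * z ^ q := ENNReal.rpow_add_of_nonneg _ _ (mul_nonneg hp0 hq0) hq0
        _ ≤ (N j : ℝ≥0∞) ^ (p * q) * z ^ q := by
            gcongr
    simp only [lmarginal]
    calc ∫⁻ y, ∏ j, (H j (Function.updateFinset x (Sᶜ) y)) ^ p
          ∂(Measure.pi fun i : (Sᶜ : Finset (Fin n)) => μ i)
        ≤ ∫⁻ y, ∏ j, ((N j : ℝ≥0∞) ^ p * H j (Function.updateFinset x (Sᶜ) y)) ^ q
          ∂(Measure.pi fun i : (Sᶜ : Finset (Fin n)) => μ i) := by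
          refine lintegral_mono (fun y => Finset.prod_le_prod' (fun j _ => ?_))
          exact hpoint j _ (hH_le j _)
      _ ≤ ∏ j, (∫⁻ y, (N j : ℝ≥0∞) ^ p * H j (Function.updateFinset x (Sᶜ) y)
          ∂(Measure.pi fun i : (Sᶜ : Finset (Fin n)) => μ i)) ^ q := by
          refine ENNReal.lintegral_prod_norm_pow_le _ (fun j _ => ?_) ?_ (fun _ _ => hq0)
          · exact (((hH_meas j).comp measurable_updateFinset).const_mul _).aemeasurable
          · rw [Finset.sum_const, Finset.card_univ, Fintype.card_fin, nsmul_eq_mul, hq]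
            field_simp
      _ = ∏ j, ((N j : ℝ≥0∞) ^ p * (∫⁻ y, H j (Function.updateFinset x (Sᶜ) y)
          ∂(Measure.pi fun i : (Sᶜ : Finset (Fin n)) => μ i))) ^ q := by
          refine Finset.prod_congr rfl (fun j _ => ?_)
          rw [lintegral_const_mul]
          exact (hH_meas j).comp measurable_updateFinset
  -- assembling
  have hx0 : ∃ x0 : Fin n → ℂ, True := ⟨0, trivial⟩
  obtain ⟨x0, -⟩ := hx0
  have hunion : (Sᶜ : Finset (Fin n)) ∪ S = Finset.univ := by
    ext m
    simp only [Finset.mem_union, Finset.mem_compl, Finset.mem_univ, iff_true]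
    by_cases h : m ∈ S
    · exact Or.inr h
    · exact Or.inl h
  have hdisj : Disjoint (Sᶜ : Finset (Fin n)) S := disjoint_compl_left
  calc ∫⁻ x : Fin n → ℂ, Fint x = (∫⋯∫⁻_Finset.univ, Fint ∂μ) x0 := by
        rw [← lintegral_eq_lmarginal_univ x0]
        rfl
    _ = (∫⋯∫⁻_(Sᶜ), (∫⋯∫⁻_S, Fint ∂μ) ∂μ) x0 := by
        rw [← hunion, lmarginal_union μ Fint hF_meas hdisj]
    _ ≤ (∫⋯∫⁻_(Sᶜ), (fun x => a ^ k * ∏ j, (H j x) ^ p) ∂μ) x0 :=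
        lmarginal_mono (fun x => stage1 x) x0
    _ = a ^ k * (∫⋯∫⁻_(Sᶜ), (fun x => ∏ j, (H j x) ^ p) ∂μ) x0 := by
        simp only [lmarginal]
        rw [lintegral_const_mul]
        exact (Finset.measurable_prod _ (fun j _ => (hH_meas j).pow_const p)).comp
          measurable_updateFinset
    _ ≤ a ^ k * ∏ j, ((N j : ℝ≥0∞) ^ p * ((∫⋯∫⁻_(Sᶜ), H j ∂μ) x0)) ^ q := by
        gcongr
        exact stage2 x0
    _ = a ^ k * ∏ j, ((N j : ℝ≥0∞) ^ p * ((N j : ℝ≥0∞) * a ^ (n-k))) ^ q := by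
        congr 1
        exact Finset.prod_congr rfl (fun j _ => by rw [hmarg_H j x0])
    _ ≤ a ^ n * ∏ j, (N j : ℝ≥0∞) ^ p := by
        have hper : ∀ j : Fin k, ((N j : ℝ≥0∞) ^ p * ((N j : ℝ≥0∞) * a ^ (n-k))) ^ q =
            (N j : ℝ≥0∞) ^ p * (a ^ (n-k)) ^ q := by
          intro j
          rw [ENNReal.mul_rpow_of_nonneg _ _ hq0, ENNReal.mul_rpow_of_nonneg _ _ hq0]
          rw [← ENNReal.rpow_mul, ← mul_assoc]
          congr 1
          have : ((N j : ℝ≥0∞) ^ (p * q)) * (N j : ℝ≥0∞) ^ q = (N j : ℝ≥0∞) ^ (p * q + q) :=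
            (ENNReal.rpow_add_of_nonneg _ _ (mul_nonneg hp0 hq0) hq0).symm
          rw [this, e1]
        rw [Finset.prod_congr rfl (fun j _ => hper j), Finset.prod_mul_distrib,
          Finset.prod_const, Finset.card_univ, Fintype.card_fin]
        have hconst : ((a ^ (n-k) : ℝ≥0∞) ^ q) ^ (k:ℕ) = a ^ (n-k) := by
          rw [← ENNReal.rpow_natCast a (n-k), ← ENNReal.rpow_mul,
            ← ENNReal.rpow_natCast (a ^ (((n-k:ℕ):ℝ) * q)) k, ← ENNReal.rpow_mul]
          rw [mul_assoc, eqk, mul_one, ENNReal.rpow_natCast]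
        rw [hconst, ← mul_assoc, mul_comm (a^k) _, mul_assoc, ← pow_add,
          Nat.add_sub_cancel' hkn]
        rw [mul_comm]

/-- Lemma 3.8 of the paper (the case `ν = 0`): if `|v_1 ∧ ⋯ ∧ v_k| > c` for
unit vectors `v_j ∈ ℂ^n` and each member of the `j`-th family is the
`δ`-neighborhood of an affine complex line with direction exactly `v_j`, then
`∫ ∏_j (∑ χ_{U_{i,j}})^{1/(k−1)} ≤ C δ^{2n} ∏_j (#𝕌_j)^{1/(k−1)}`. -/
theorem multilinear_kakeya_parallel {n k : ℕ}
    (hn : 2 ≤ n) (hk2 : 2 ≤ k) (hkn : k ≤ n) (c : ℝ) (hc : 0 < c)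
    (v : Fin k → (Fin n → ℂ)) (hv : ∀ j, cnorm (v j) = 1)
    (hwedge : c < wedgeAbs v) :
    ∃ C : ℝ, 0 < C ∧
      ∀ δ : ℝ, 0 < δ →
      ∀ N : Fin k → ℕ,
      ∀ a : (j : Fin k) → Fin (N j) → (Fin n → ℂ),
        (∫⁻ w, ∏ j, (∑ i, (tube (a j i) (v j) δ).indicator
              (fun _ => (1 : ENNReal)) w) ^ (1 / ((k : ℝ) - 1))) ≤
          ENNReal.ofReal (C * δ ^ (2 * n)) *
            ∏ j, (N j : ENNReal) ^ (1 / ((k : ℝ) - 1)) := by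
    classical
  obtain ⟨M, hMcol, hMent, hMdet⟩ := wedge_matrix hkn c hc v hv hwedge
  have habs : 0 < |M.det| := lt_trans hc hMdet
  have hdetM_ne : M.det ≠ 0 := fun h => by rw [h, abs_zero] at habs; exact lt_irrefl _ habs
  have hunit : IsUnit M.det := isUnit_iff_ne_zero.2 hdetM_ne
  set Nm : Matrix (Fin n × Fin 2) (Fin n × Fin 2) ℝ := M⁻¹ with hNm
  have hNM : Nm * M = 1 := Matrix.nonsing_inv_mul M hunit
  -- entry bound for the inverse
  set Kent : ℝ := (Nat.factorial (n*2) : ℝ) / c with hKent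
  have hKent0 : 0 < Kent := by
    rw [hKent]
    positivity
  have hNent : ∀ q r', |Nm q r'| ≤ Kent := by
    intro q r'
    rw [hNm, Matrix.inv_def]
    simp only [Matrix.smul_apply, smul_eq_mul]
    rw [Ring.inverse_eq_inv', abs_mul, abs_inv]
    have hadj : |M.adjugate q r'| ≤ (Nat.factorial (n*2) : ℝ) := by
      rw [Matrix.adjugate_apply]
      have hent : ∀ i j', |(M.updateRow r' (Pi.single q 1)) i j'| ≤ 1 := by
        intro i j'
        rw [Matrix.updateRow_apply]
        split_ifs
        · by_cases hj : j' = q <;> simp [Pi.single_apply, hj]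
        · exact hMent i j'
      have := abs_det_le_factorial (M.updateRow r' (Pi.single q 1)) hent
      rwa [Fintype.card_prod, Fintype.card_fin, Fintype.card_fin] at this
    have hinv : |M.det|⁻¹ ≤ c⁻¹ := by
      apply inv_anti₀ hc hMdet.le
    calc |M.det|⁻¹ * |M.adjugate q r'| ≤ c⁻¹ * (Nat.factorial (n*2) : ℝ) := by
          apply mul_le_mul hinv hadj (abs_nonneg _) (by positivity)
      _ = Kent := by rw [hKent]; ring
  set Kc : ℝ := (2*(n:ℝ)) * Kent with hKc
  have hKc0 : 0 < Kc := by
    rw [hKc]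
    have hn0 : (0:ℝ) < (n:ℝ) := by
      have : 0 < n := by omega
      exact_mod_cast this
    positivity
  -- the real-linear change of variables
  set φL : (Fin n → ℂ) →ₗ[ℝ] (Fin n → ℂ) :=
    ((IrlEquiv n).symm.toLinearMap.comp
      ((Matrix.toLin' Nm).comp (IrlEquiv n).toLinearMap)) with hφL
  have hφapp : ∀ (x : Fin n → ℂ) (m : Fin n),
      φL x m = ⟨Nm.mulVec (Irl x) (m, 0), Nm.mulVec (Irl x) (m, 1)⟩ := by
    intro x m
    rw [hφL]
    simp only [LinearMap.coe_comp, Function.comp_apply, LinearEquiv.coe_coe,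
      Matrix.toLin'_apply]
    rfl
  have hdetφ : LinearMap.det φL = Nm.det := by
    rw [hφL]
    have h := LinearMap.det_conj (Matrix.toLin' Nm) (IrlEquiv n).symm
    rw [LinearEquiv.symm_symm] at h
    rw [h]
    exact LinearMap.det_toLin' Nm
  have hNmdet : Nm.det = (M.det)⁻¹ := by
    rw [hNm, Matrix.det_nonsing_inv, Ring.inverse_eq_inv']
  have hdetφ_ne : LinearMap.det φL ≠ 0 := by
    rw [hdetφ, hNmdet]
    exact inv_ne_zero hdetM_ne
  have hφmeas : Measurable (⇑φL) := φL.continuous_of_finiteDimensional.measurable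
  -- column identity
  have hNcol : ∀ (j : Fin k) (ε : Fin 2) (q : Fin n × Fin 2),
      Nm.mulVec (fun r' => M r' (Fin.castLE hkn j, ε)) q =
        if q = (Fin.castLE hkn j, ε) then 1 else 0 := by
    intro j ε q
    have h1 : Nm.mulVec (fun r' => M r' (Fin.castLE hkn j, ε)) q =
        (Nm * M) q (Fin.castLE hkn j, ε) := by
      simp [Matrix.mulVec, dotProduct, Matrix.mul_apply]
    rw [h1, hNM, Matrix.one_apply]
  -- mulVec sup bound
  have hmulVec : ∀ (z : Fin n × Fin 2 → ℝ) (δ' : ℝ), (∀ r', |z r'| ≤ δ') →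
      ∀ q, |Nm.mulVec z q| ≤ Kc * δ' := by
    intro z δ' hz q
    have hδ'0 : 0 ≤ δ' := le_trans (abs_nonneg _) (hz q)
    calc |Nm.mulVec z q| = |∑ r', Nm q r' * z r'| := by
          simp [Matrix.mulVec, dotProduct]
      _ ≤ ∑ r', |Nm q r' * z r'| := Finset.abs_sum_le_sum_abs _ _
      _ ≤ ∑ _r' : Fin n × Fin 2, Kent * δ' := by
          refine Finset.sum_le_sum (fun r' _ => ?_)
          rw [abs_mul]
          exact mul_le_mul (hNent q r') (hz r') (abs_nonneg _) hKent0.le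
      _ = Kc * δ' := by
          rw [Finset.sum_const, Finset.card_univ, Fintype.card_prod,
            Fintype.card_fin, Fintype.card_fin, nsmul_eq_mul, hKc]
          push_cast
          ring
  -- the decomposition identity
  have hdecomp : ∀ (j : Fin k) (aa x w : Fin n → ℂ) (lam : ℂ),
      (∀ m', x m' = aa m' + lam * v j m' + w m') →
      ∀ r', Irl x r' = Irl aa r' +
        (lam.re * M r' (Fin.castLE hkn j, 0) + lam.im * M r' (Fin.castLE hkn j, 1)) +
        Irl w r' := by
    intro j aa x w lam hx r'
    rw [hMcol j 0 r', hMcol j 1 r']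
    simp only [if_pos rfl, if_neg (by decide : (1:Fin 2) ≠ 0)]
    rcases r' with ⟨m', ε⟩
    have hx' := hx m'
    have hIsmul : (Complex.I • v j) m' = Complex.I * v j m' := rfl
    fin_cases ε <;>
      simp [Irl, hx', hIsmul, Complex.add_re, Complex.add_im,
        Complex.mul_re, Complex.mul_im, Complex.I_re, Complex.I_im] <;>
      ring
  -- key geometric bound
  refine ⟨(Nat.factorial (n*2) : ℝ) * (((2*Kc)^2 * Real.pi)^n), by positivity, ?_⟩
  intro δ hδ N a
  set r : ℝ := 2 * (Kc * δ) with hr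
  have hr0 : 0 ≤ r := by positivity
  set bc : (j : Fin k) → Fin (N j) → Fin n → ℂ := fun j i => φL (a j i) with hbc
  have hKey : ∀ (j : Fin k) (i : Fin (N j)) (x : Fin n → ℂ),
      x ∈ tube (a j i) (v j) δ →
      ∀ m : Fin n, m ≠ Fin.castLE hkn j →
      ‖φL x m - bc j i m‖ ≤ r := by
    intro j i x hx m hm
    obtain ⟨lam, hlam⟩ := hx
    set w : Fin n → ℂ := fun q => x q - (a j i q + lam * v j q) with hw
    -- coordinatewise bound on w
    have hwbd : ∀ r', |Irl w r'| ≤ δ := by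
      intro r'
      have hsum : ∑ q, ‖w q‖ ^ 2 < δ ^ 2 := by
        have := hlam
        rw [cnorm] at this
        exact (Real.sqrt_lt' hδ).1 this
      have habs : ‖w r'.1‖ ≤ δ := by
        have h1 : ‖w r'.1‖ ^ 2 ≤ ∑ q, ‖w q‖ ^ 2 :=
          Finset.single_le_sum (f := fun q => ‖w q‖ ^ 2)
            (fun q _ => sq_nonneg _) (Finset.mem_univ r'.1)
        nlinarith [norm_nonneg (w r'.1)]
      rw [Irl]
      split
      · exact le_trans (le_trans (Complex.abs_re_le_norm _) le_rfl) habs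
      · exact le_trans (Complex.abs_im_le_norm _) habs
    -- expansion of the transformed point
    have hxw : ∀ m', x m' = a j i m' + lam * v j m' + w m' := by
      intro m'
      rw [hw]
      ring
    have hexp : ∀ q : Fin n × Fin 2, Nm.mulVec (Irl x) q =
        Nm.mulVec (Irl (a j i)) q +
          (lam.re * Nm.mulVec (fun r' => M r' (Fin.castLE hkn j, 0)) q +
            lam.im * Nm.mulVec (fun r' => M r' (Fin.castLE hkn j, 1)) q) +
          Nm.mulVec (Irl w) q := by
      intro q
      simp only [Matrix.mulVec, dotProduct]
      calc ∑ r', Nm q r' * Irl x r'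
          = ∑ r', (Nm q r' * Irl (a j i) r' +
              (lam.re * (Nm q r' * M r' (Fin.castLE hkn j, 0)) +
                lam.im * (Nm q r' * M r' (Fin.castLE hkn j, 1))) +
              Nm q r' * Irl w r') :=
            Finset.sum_congr rfl (fun r' _ => by
              rw [hdecomp j (a j i) x w lam hxw r']; ring)
        _ = _ := by
            rw [Finset.sum_add_distrib, Finset.sum_add_distrib, Finset.sum_add_distrib,
              ← Finset.mul_sum, ← Finset.mul_sum]
    have hcoordbd : ∀ ε : Fin 2,
        |Nm.mulVec (Irl x) (m, ε) - Nm.mulVec (Irl (a j i)) (m, ε)| ≤ Kc * δ := by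
      intro ε
      have h1 := hexp (m, ε)
      have h2 : ((m, ε) : Fin n × Fin 2) ≠ (Fin.castLE hkn j, (0:Fin 2)) ∨ True := Or.inr trivial
      rw [hNcol j 0 (m, ε), hNcol j 1 (m, ε)] at h1
      rw [if_neg (by simp [hm] : ¬((m, ε) : Fin n × Fin 2) = (Fin.castLE hkn j, (0:Fin 2))),
        if_neg (by simp [hm] : ¬((m, ε) : Fin n × Fin 2) = (Fin.castLE hkn j, (1:Fin 2)))] at h1
      have h3 : Nm.mulVec (Irl x) (m, ε) - Nm.mulVec (Irl (a j i)) (m, ε) =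
          Nm.mulVec (Irl w) (m, ε) := by rw [h1]; ring
      rw [h3]
      exact hmulVec (Irl w) δ hwbd (m, ε)
    -- assemble
    have hre : (φL x m - bc j i m).re =
        Nm.mulVec (Irl x) (m, 0) - Nm.mulVec (Irl (a j i)) (m, 0) := by
      simp only [hbc, Complex.sub_re]
      rw [hφapp x m, hφapp (a j i) m]
    have him : (φL x m - bc j i m).im =
        Nm.mulVec (Irl x) (m, 1) - Nm.mulVec (Irl (a j i)) (m, 1) := by
      simp only [hbc, Complex.sub_im]
      rw [hφapp x m, hφapp (a j i) m]
    calc ‖φL x m - bc j i m‖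
        ≤ |(φL x m - bc j i m).re| + |(φL x m - bc j i m).im| :=
          Complex.norm_le_abs_re_add_abs_im _
      _ ≤ Kc * δ + Kc * δ := by
          rw [hre, him]
          exact add_le_add (hcoordbd 0) (hcoordbd 1)
      _ = r := by rw [hr]; ring
  -- the comparison function
  set Gg : (Fin n → ℂ) → ℝ≥0∞ := fun y =>
    ∏ j, (∑ i, ∏ m ∈ Finset.univ.erase (Fin.castLE hkn j),
      (Metric.closedBall (bc j i m) r).indicator (1 : ℂ → ℝ≥0∞) (y m)) ^ ((1:ℝ)/((k:ℝ)-1))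
    with hGg
  have hp0 : 0 ≤ (1:ℝ)/((k:ℝ)-1) := by
    have : (2:ℝ) ≤ (k:ℝ) := by exact_mod_cast hk2
    apply div_nonneg zero_le_one
    linarith
  have hGgmeas : Measurable Gg := by
    refine Finset.measurable_prod _ (fun j _ => Measurable.pow_const ?_ _)
    refine Finset.measurable_sum _ (fun i _ => ?_)
    refine Finset.measurable_prod _ (fun m _ => ?_)
    exact (measurable_const.indicator measurableSet_closedBall).comp (measurable_pi_apply m)
  -- pointwise bound
  have hpt : ∀ x : Fin n → ℂ,
      (∏ j, (∑ i, (tube (a j i) (v j) δ).indicator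
        (fun _ => (1 : ENNReal)) x) ^ (1 / ((k : ℝ) - 1))) ≤ Gg (φL x) := by
    intro x
    rw [hGg]
    refine Finset.prod_le_prod' (fun j _ =>
      ENNReal.rpow_le_rpow (Finset.sum_le_sum (fun i _ => ?_)) hp0)
    by_cases hx : x ∈ tube (a j i) (v j) δ
    · rw [Set.indicator_of_mem hx]
      have hone : ∀ m ∈ Finset.univ.erase (Fin.castLE hkn j),
          (Metric.closedBall (bc j i m) r).indicator (1 : ℂ → ℝ≥0∞) (φL x m) = 1 := by
        intro m hm
        have hmem : φL x m ∈ Metric.closedBall (bc j i m) r := by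
          rw [Metric.mem_closedBall, Complex.dist_eq]
          exact hKey j i x hx m (Finset.mem_erase.1 hm).1
        rw [Set.indicator_of_mem hmem]
        rfl
      rw [Finset.prod_congr rfl hone, Finset.prod_const_one]
    · rw [Set.indicator_of_notMem hx]
      exact zero_le
  -- change of variables
  have hCoV : ∫⁻ x, Gg (φL x) = ENNReal.ofReal |M.det| * ∫⁻ y, Gg y := by
    have hmap := Measure.map_linearMap_addHaar_eq_smul_addHaar
      (volume : Measure (Fin n → ℂ)) hdetφ_ne
    calc ∫⁻ x, Gg (φL x) = ∫⁻ y, Gg y ∂(Measure.map φL volume) :=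
          (lintegral_map hGgmeas hφmeas).symm
      _ = ENNReal.ofReal |(LinearMap.det φL)⁻¹| * ∫⁻ y, Gg y := by
          rw [hmap, lintegral_smul_measure, smul_eq_mul]
      _ = ENNReal.ofReal |M.det| * ∫⁻ y, Gg y := by
          rw [hdetφ, hNmdet, inv_inv]
  -- determinant bound
  have hdet_le : |M.det| ≤ (Nat.factorial (n*2) : ℝ) := by
    have := abs_det_le_factorial M hMent
    rwa [Fintype.card_prod, Fintype.card_fin, Fintype.card_fin] at this
  have hpi : (NNReal.pi : ℝ≥0∞) = ENNReal.ofReal Real.pi := by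
    rw [← NNReal.coe_real_pi, ENNReal.ofReal_coe_nnreal]
  -- final computation
  calc (∫⁻ w, ∏ j, (∑ i, (tube (a j i) (v j) δ).indicator
          (fun _ => (1 : ENNReal)) w) ^ (1 / ((k : ℝ) - 1)))
      ≤ ∫⁻ x, Gg (φL x) := lintegral_mono hpt
    _ = ENNReal.ofReal |M.det| * ∫⁻ y, Gg y := hCoV
    _ ≤ ENNReal.ofReal |M.det| *
        ((ENNReal.ofReal r ^ 2 * (NNReal.pi : ℝ≥0∞)) ^ n *
          ∏ j, (N j : ℝ≥0∞) ^ ((1:ℝ)/((k:ℝ)-1))) := by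
        gcongr
        exact core_ineq hk2 hkn r N bc
    _ ≤ ENNReal.ofReal ((Nat.factorial (n*2) : ℝ) * (((2*Kc)^2 * Real.pi)^n) * δ ^ (2*n)) *
          ∏ j, (N j : ℝ≥0∞) ^ (1 / ((k:ℝ)-1)) := by
        rw [← mul_assoc]
        gcongr ?_ * ?_
        · have h1 : (ENNReal.ofReal r) ^ 2 = ENNReal.ofReal (r^2) := by
            rw [← ENNReal.ofReal_pow hr0]
          rw [h1, hpi, ← ENNReal.ofReal_mul (by positivity), ← ENNReal.ofReal_pow (by positivity),
            ← ENNReal.ofReal_mul (abs_nonneg _)]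
          apply ENNReal.ofReal_le_ofReal
          have hconst : (Nat.factorial (n*2) : ℝ) * ((r^2) * Real.pi)^n =
              ((Nat.factorial (n*2) : ℝ) * (((2*Kc)^2 * Real.pi)^n)) * δ^(2*n) := by
            rw [hr, pow_mul]
            ring
          calc |M.det| * (r ^ 2 * Real.pi) ^ n
              ≤ (Nat.factorial (n*2) : ℝ) * (r ^ 2 * Real.pi) ^ n := by
                apply mul_le_mul_of_nonneg_right hdet_le (by positivity)
            _ = _ := by rw [hconst]
        · exact le_rfl

end
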